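/- Let Θ be a nonempty index set and (κ_θ)_{θ∈Θ} a family of Markov kernels on ℝ^d, and define the nonlinear Markov operator P̄f(x) = sup_{θ∈Θ} ∫_{ℝ^d} f(y) κ_θ(x,dy) for bounded Borel measurable f ≥ 0. Suppose Φ : [0,∞) → [0,∞) is C¹, increasing, with Φ'(1) > 0 and lim_{r→∞} Φ(r) = ∞, and Ψ : ℝ^d × ℝ^d → [0,∞) satisfies lim_{y→x} (Ψ(x,y) + Ψ(y,x)) = 0 for every x ∈ ℝ^d. If the Harnack-type inequality Φ(P̄f(x)) ≤ P̄(Φ∘f)(y)·e^{Ψ(x,y)} holds for all bounded Borel measurable f ≥ 0 and all x, y ∈ ℝ^d, then P̄ is strong Feller: for every bounded Borel measurable f ≥ 0, the function x ↦ P̄f(x) is continuous on ℝ^d. -/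

import Mathlib

open MeasureTheory ProbabilityTheory Filter

/-- The nonlinear Markov operator `P̄ f x = ⨆ θ, ∫ f dκ_θ(x,·)` associated with a family
of Markov kernels on `ℝ^d`. -/
noncomputable def nlOp {d : ℕ} {Θ : Type*}
    (κ : Θ → Kernel (EuclideanSpace ℝ (Fin d)) (EuclideanSpace ℝ (Fin d)))
    (f : EuclideanSpace ℝ (Fin d) → ℝ) (x : EuclideanSpace ℝ (Fin d)) : ℝ :=
  ⨆ θ, ∫ y, f y ∂(κ θ x)

lemma aux_ciSup_add {ι : Type*} [Nonempty ι] (g : ι → ℝ) (c : ℝ)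
    (hg : BddAbove (Set.range g)) :
    (⨆ i, c + g i) = c + ⨆ i, g i := by
  apply le_antisymm
  · exact ciSup_le fun i => add_le_add_right (le_ciSup hg i) c
  · obtain ⟨M, hM⟩ := hg
    have hb : BddAbove (Set.range fun i => c + g i) :=
      ⟨c + M, fun v ⟨i, hi⟩ => hi ▸ add_le_add_right (hM ⟨i, rfl⟩) c⟩
    have : (⨆ i, g i) ≤ (⨆ i, c + g i) - c :=
      ciSup_le fun i => le_sub_iff_add_le.2 (by rw [add_comm]; exact le_ciSup hb i)
    linarith

section aux

variable {d : ℕ} {Θ : Type*} [Nonempty Θ]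
  (κ : Θ → Kernel (EuclideanSpace ℝ (Fin d)) (EuclideanSpace ℝ (Fin d)))

lemma aux_integrable (hκ : ∀ θ, IsMarkovKernel (κ θ))
    (g : EuclideanSpace ℝ (Fin d) → ℝ) (B : ℝ) (hgm : Measurable g)
    (hg0 : ∀ z, 0 ≤ g z) (hgB : ∀ z, g z ≤ B) (θ : Θ) (x : EuclideanSpace ℝ (Fin d)) :
    Integrable g (κ θ x) := by
  haveI := hκ θ
  exact (integrable_const B).mono' hgm.aestronglyMeasurable
    (Eventually.of_forall fun z => by
      rw [Real.norm_eq_abs, abs_of_nonneg (hg0 z)]; exact hgB z)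

lemma aux_integral_le (hκ : ∀ θ, IsMarkovKernel (κ θ))
    (g : EuclideanSpace ℝ (Fin d) → ℝ) (B : ℝ) (hgm : Measurable g)
    (hg0 : ∀ z, 0 ≤ g z) (hgB : ∀ z, g z ≤ B) (θ : Θ) (x : EuclideanSpace ℝ (Fin d)) :
    ∫ z, g z ∂(κ θ x) ≤ B := by
  haveI := hκ θ
  calc ∫ z, g z ∂(κ θ x) ≤ ∫ _z, B ∂(κ θ x) :=
        integral_mono (aux_integrable κ hκ g B hgm hg0 hgB θ x) (integrable_const B) hgB
    _ = B := by simp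

lemma aux_bddAbove (hκ : ∀ θ, IsMarkovKernel (κ θ))
    (g : EuclideanSpace ℝ (Fin d) → ℝ) (B : ℝ) (hgm : Measurable g)
    (hg0 : ∀ z, 0 ≤ g z) (hgB : ∀ z, g z ≤ B) (x : EuclideanSpace ℝ (Fin d)) :
    BddAbove (Set.range fun θ => ∫ z, g z ∂(κ θ x)) :=
  ⟨B, fun v ⟨θ, hθ⟩ => hθ ▸ aux_integral_le κ hκ g B hgm hg0 hgB θ x⟩

lemma aux_nlOp_nonneg (hκ : ∀ θ, IsMarkovKernel (κ θ))
    (g : EuclideanSpace ℝ (Fin d) → ℝ) (B : ℝ) (hgm : Measurable g)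
    (hg0 : ∀ z, 0 ≤ g z) (hgB : ∀ z, g z ≤ B) (x : EuclideanSpace ℝ (Fin d)) :
    0 ≤ nlOp κ g x := by
  obtain ⟨θ⟩ := ‹Nonempty Θ›
  exact le_trans (integral_nonneg hg0)
    (le_ciSup (aux_bddAbove κ hκ g B hgm hg0 hgB x) θ)

lemma aux_nlOp_le (hκ : ∀ θ, IsMarkovKernel (κ θ))
    (g : EuclideanSpace ℝ (Fin d) → ℝ) (B : ℝ) (hgm : Measurable g)
    (hg0 : ∀ z, 0 ≤ g z) (hgB : ∀ z, g z ≤ B) (x : EuclideanSpace ℝ (Fin d)) :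
    nlOp κ g x ≤ B :=
  ciSup_le fun θ => aux_integral_le κ hκ g B hgm hg0 hgB θ x

/-- Key consequence of the Harnack inequality applied to `1 + ε f`. -/
lemma harnack_key (hκ : ∀ θ, IsMarkovKernel (κ θ))
    (Φ : ℝ → ℝ) (Φ' : ℝ → ℝ)
    (hΦnonneg : ∀ r ∈ Set.Ici (0:ℝ), 0 ≤ Φ r)
    (hΦderiv : ∀ r ∈ Set.Ici (0:ℝ), HasDerivWithinAt Φ (Φ' r) (Set.Ici 0) r)
    (Ψ : EuclideanSpace ℝ (Fin d) → EuclideanSpace ℝ (Fin d) → ℝ)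
    (hHarnack : ∀ f : EuclideanSpace ℝ (Fin d) → ℝ, Measurable f → (∀ y, 0 ≤ f y) →
      (∃ C, ∀ y, f y ≤ C) → ∀ x y,
      Φ (nlOp κ f x) ≤ nlOp κ (fun z => Φ (f z)) y * Real.exp (Ψ x y))
    (f : EuclideanSpace ℝ (Fin d) → ℝ) (hfm : Measurable f) (hf0 : ∀ y, 0 ≤ f y)
    (K : ℝ) (hK0 : 0 ≤ K) (hfK : ∀ y, f y ≤ K)
    (ε δ : ℝ) (hε : 0 < ε) (hδ : 0 < δ) (hδa : δ < Φ' 1)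
    (hnear : ∀ z ∈ Set.Icc (1:ℝ) (1+ε*K), |Φ' z - Φ' 1| ≤ δ)
    (x y : EuclideanSpace ℝ (Fin d)) :
    Φ 1 + ε*(Φ' 1 - δ)*(nlOp κ f x) ≤
      (Φ 1 + ε*(Φ' 1 + δ)*(nlOp κ f y)) * Real.exp (Ψ x y) := by
  set a := Φ' 1 with hadef
  set p := Φ 1 with hpdef
  set u := nlOp κ f with hudef
  have hεK : 0 ≤ ε*K := mul_nonneg hε.le hK0
  set g : EuclideanSpace ℝ (Fin d) → ℝ := fun z => 1 + ε * f z with hgdef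
  have hgm : Measurable g := measurable_const.add (hfm.const_mul ε)
  have hg0 : ∀ z, 0 ≤ g z := fun z => by
    have := mul_nonneg hε.le (hf0 z); simp only [hgdef]; linarith
  have hgB : ∀ z, g z ≤ 1 + ε*K := fun z => by
    have := mul_le_mul_of_nonneg_left (hfK z) hε.le; simp only [hgdef]; linarith
  -- facts about Φ on D = Icc 1 (1+εK)
  have hΦcont : ContinuousOn Φ (Set.Ici 0) := fun r hr => (hΦderiv r hr).continuousWithinAt
  set D := Set.Icc (1:ℝ) (1+ε*K) with hDdef
  have hDsub : D ⊆ Set.Ici (0:ℝ) := fun r hr => le_trans zero_le_one hr.1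
  have hderiv_at : ∀ r ∈ interior D, HasDerivAt Φ (Φ' r) r := by
    intro r hr
    have hr' : r ∈ D := interior_subset hr
    have h0 : (0:ℝ) < r := lt_of_lt_of_le one_pos hr'.1
    exact (hΦderiv r h0.le).hasDerivAt (Ici_mem_nhds h0)
  have hdiff : DifferentiableOn ℝ Φ (interior D) :=
    fun r hr => (hderiv_at r hr).differentiableAt.differentiableWithinAt
  have hlow : ∀ r ∈ interior D, a - δ ≤ deriv Φ r := by
    intro r hr
    rw [(hderiv_at r hr).deriv]
    have h := abs_le.1 (hnear r (interior_subset hr))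
    linarith [h.1]
  have hhigh : ∀ r ∈ interior D, deriv Φ r ≤ a + δ := by
    intro r hr
    rw [(hderiv_at r hr).deriv]
    have h := abs_le.1 (hnear r (interior_subset hr))
    linarith [h.2]
  have h1D : (1:ℝ) ∈ D := ⟨le_refl 1, le_add_of_nonneg_right hεK⟩
  have hMVTlow : ∀ t : ℝ, 0 ≤ t → t ≤ ε*K → p + (a-δ)*t ≤ Φ (1+t) := by
    intro t ht1 ht2
    have h := (convex_Icc (1:ℝ) (1+ε*K)).mul_sub_le_image_sub_of_le_deriv
      (hΦcont.mono hDsub) hdiff hlow 1 h1D (1+t) ⟨by linarith, by linarith⟩ (by linarith)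
    have h' : (a-δ)*t ≤ Φ (1+t) - p := by
      have : (1:ℝ) + t - 1 = t := by ring
      rw [this] at h; exact h
    linarith
  have hMVThigh : ∀ t : ℝ, 0 ≤ t → t ≤ ε*K → Φ (1+t) ≤ p + (a+δ)*t := by
    intro t ht1 ht2
    have h := (convex_Icc (1:ℝ) (1+ε*K)).image_sub_le_mul_sub_of_deriv_le
      (hΦcont.mono hDsub) hdiff hhigh 1 h1D (1+t) ⟨by linarith, by linarith⟩ (by linarith)
    have h' : Φ (1+t) - p ≤ (a+δ)*t := by
      have : (1:ℝ) + t - 1 = t := by ring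
      rw [this] at h; exact h
    linarith
  -- measurability of Φ ∘ g
  have hΦmax : Continuous (fun r : ℝ => Φ (max r 0)) :=
    hΦcont.comp_continuous (continuous_id.max continuous_const) (fun r => Set.mem_Ici.2 (le_max_right _ _))
  have hΦgm : Measurable (fun z => Φ (g z)) := by
    have heq : (fun z => Φ (g z)) = (fun r : ℝ => Φ (max r 0)) ∘ g := by
      funext z
      simp only [Function.comp_apply, max_eq_left (hg0 z)]
    rw [heq]; exact hΦmax.measurable.comp hgm
  -- pointwise bounds on Φ ∘ g
  have hUb : ∀ z, Φ (g z) ≤ p + ((a+δ)*ε) * f z := by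
    intro z
    have h := hMVThigh (ε * f z) (mul_nonneg hε.le (hf0 z))
      (mul_le_mul_of_nonneg_left (hfK z) hε.le)
    have : Φ (g z) = Φ (1 + ε * f z) := rfl
    rw [this]
    nlinarith [h]
  have hΦg0 : ∀ z, 0 ≤ Φ (g z) := fun z => hΦnonneg _ (hg0 z)
  have haδ : (0:ℝ) < a + δ := by linarith
  have hΦgB : ∀ z, Φ (g z) ≤ p + ((a+δ)*ε) * K := by
    intro z
    have h1 := hUb z
    have h2 : ((a+δ)*ε) * f z ≤ ((a+δ)*ε) * K :=
      mul_le_mul_of_nonneg_left (hfK z) (mul_nonneg haδ.le hε.le)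
    linarith
  -- nlOp of g is affine
  have hIle : ∀ θ w, ∫ z, f z ∂(κ θ w) ≤ u w := fun θ w =>
    le_ciSup (aux_bddAbove κ hκ f K hfm hf0 hfK w) θ
  have hlin : nlOp κ g x = 1 + ε * u x := by
    have h1 : ∀ θ, ∫ z, g z ∂(κ θ x) = 1 + ε * ∫ z, f z ∂(κ θ x) := by
      intro θ
      haveI := hκ θ
      have : (fun z => g z) = fun z => 1 + ε * f z := rfl
      rw [this, integral_add (integrable_const 1)
        ((aux_integrable κ hκ f K hfm hf0 hfK θ x).const_mul ε), integral_const_mul ε _]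
      simp
    have hbdd : BddAbove (Set.range fun θ => ε * ∫ z, f z ∂(κ θ x)) := by
      refine ⟨ε * K, ?_⟩
      rintro v ⟨θ, rfl⟩
      exact mul_le_mul_of_nonneg_left (aux_integral_le κ hκ f K hfm hf0 hfK θ x) hε.le
    show (⨆ θ, ∫ z, g z ∂(κ θ x)) = 1 + ε * u x
    simp_rw [h1]
    rw [aux_ciSup_add _ _ hbdd, ← Real.mul_iSup_of_nonneg hε.le]
    rfl
  -- Harnack
  have hH := hHarnack g hgm hg0 ⟨1+ε*K, hgB⟩ x y
  rw [hlin] at hH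
  have hux0 : 0 ≤ u x := aux_nlOp_nonneg κ hκ f K hfm hf0 hfK x
  have huxK : u x ≤ K := aux_nlOp_le κ hκ f K hfm hf0 hfK x
  have hL : p + (a-δ)*(ε*(u x)) ≤ Φ (1 + ε * u x) :=
    hMVTlow (ε * u x) (mul_nonneg hε.le hux0) (mul_le_mul_of_nonneg_left huxK hε.le)
  -- bound RHS
  have hR : nlOp κ (fun z => Φ (g z)) y ≤ p + ((a+δ)*ε)*(u y) := by
    apply ciSup_le
    intro θ
    haveI := hκ θ
    have hint1 : Integrable (fun z => Φ (g z)) (κ θ y) :=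
      aux_integrable κ hκ _ (p + ((a+δ)*ε) * K) hΦgm hΦg0 hΦgB θ y
    have hint2 : Integrable (fun z => p + ((a+δ)*ε) * f z) (κ θ y) :=
      (integrable_const p).add ((aux_integrable κ hκ f K hfm hf0 hfK θ y).const_mul _)
    calc ∫ z, Φ (g z) ∂(κ θ y) ≤ ∫ z, p + ((a+δ)*ε) * f z ∂(κ θ y) :=
          integral_mono hint1 hint2 hUb
      _ = p + ((a+δ)*ε) * ∫ z, f z ∂(κ θ y) := by
          rw [integral_add (integrable_const p)
            ((aux_integrable κ hκ f K hfm hf0 hfK θ y).const_mul _), integral_const_mul ((Φ' 1 + δ) * ε) _]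
          simp [hadef]
      _ ≤ p + ((a+δ)*ε)*(u y) := by
          have := mul_le_mul_of_nonneg_left (hIle θ y) (mul_nonneg haδ.le hε.le)
          linarith
  have hexp : (0:ℝ) < Real.exp (Ψ x y) := Real.exp_pos _
  calc p + ε*(a-δ)*(u x) = p + (a-δ)*(ε*(u x)) := by ring
    _ ≤ Φ (1 + ε * u x) := hL
    _ ≤ nlOp κ (fun z => Φ (g z)) y * Real.exp (Ψ x y) := hH
    _ ≤ (p + ((a+δ)*ε)*(u y)) * Real.exp (Ψ x y) :=
        mul_le_mul_of_nonneg_right hR hexp.le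
    _ = (p + ε*(a+δ)*(u y)) * Real.exp (Ψ x y) := by ring

end aux

theorem stmt_0 {d : ℕ} {Θ : Type*} [Nonempty Θ]
    (κ : Θ → Kernel (EuclideanSpace ℝ (Fin d)) (EuclideanSpace ℝ (Fin d)))
    (hκ : ∀ θ, IsMarkovKernel (κ θ))
    (Φ : ℝ → ℝ) (Φ' : ℝ → ℝ)
    (hΦmono : MonotoneOn Φ (Set.Ici 0))
    (hΦnonneg : ∀ r ∈ Set.Ici (0:ℝ), 0 ≤ Φ r)
    (hΦderiv : ∀ r ∈ Set.Ici (0:ℝ), HasDerivWithinAt Φ (Φ' r) (Set.Ici 0) r)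
    (hΦ'cont : ContinuousOn Φ' (Set.Ici 0))
    (hΦ'1 : 0 < Φ' 1)
    (hΦtop : Tendsto Φ atTop atTop)
    (Ψ : EuclideanSpace ℝ (Fin d) → EuclideanSpace ℝ (Fin d) → ℝ)
    (hΨnonneg : ∀ x y, 0 ≤ Ψ x y)
    (hΨlim : ∀ x, Tendsto (fun y => Ψ x y + Ψ y x) (nhds x) (nhds 0))
    (hHarnack : ∀ f : EuclideanSpace ℝ (Fin d) → ℝ, Measurable f → (∀ y, 0 ≤ f y) →
      (∃ C, ∀ y, f y ≤ C) → ∀ x y,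
      Φ (nlOp κ f x) ≤ nlOp κ (fun z => Φ (f z)) y * Real.exp (Ψ x y)) :
    ∀ f : EuclideanSpace ℝ (Fin d) → ℝ, Measurable f → (∀ y, 0 ≤ f y) →
      (∃ C, ∀ y, f y ≤ C) → Continuous (nlOp κ f) := by
  intro f hfm hf0 hfC
  obtain ⟨C, hC⟩ := hfC
  set K := max C 0 with hKdef
  have hK0 : 0 ≤ K := le_max_right _ _
  have hfK : ∀ y, f y ≤ K := fun y => (hC y).trans (le_max_left _ _)
  set a := Φ' 1 with hadef
  have ha : 0 < a := hΦ'1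
  have hp0 : 0 ≤ Φ 1 := hΦnonneg 1 (by norm_num)
  set p := Φ 1 with hpdef
  set u := nlOp κ f with hudef
  have hu0 : ∀ w, 0 ≤ u w := fun w => aux_nlOp_nonneg κ hκ f K hfm hf0 hfK w
  have huK : ∀ w, u w ≤ K := fun w => aux_nlOp_le κ hκ f K hfm hf0 hfK w
  -- choice of ε given δ
  have hchoose : ∀ δ : ℝ, 0 < δ → ∃ ε : ℝ, 0 < ε ∧
      ∀ z ∈ Set.Icc (1:ℝ) (1+ε*K), |Φ' z - a| ≤ δ := by
    intro δ hδ
    have hc := hΦ'cont 1 (by norm_num)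
    rw [Metric.continuousWithinAt_iff] at hc
    obtain ⟨r, hr, hball⟩ := hc δ hδ
    refine ⟨r/(2*(K+1)), by positivity, fun z hz => ?_⟩
    have hz0 : z ∈ Set.Ici (0:ℝ) := le_trans zero_le_one hz.1
    have hdist : dist z 1 < r := by
      rw [Real.dist_eq, abs_of_nonneg (by linarith [hz.1])]
      have h1 : r/(2*(K+1))*K ≤ r/2 := by
        rw [div_mul_eq_mul_div, div_le_div_iff₀ (by positivity) (by norm_num)]
        nlinarith
      have := hz.2
      linarith
    have := hball hz0 hdist
    rw [Real.dist_eq] at this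
    exact this.le
  rw [continuous_iff_continuousAt]
  intro x
  have hΨxy : Tendsto (fun y => Ψ x y) (nhds x) (nhds 0) := by
    apply squeeze_zero (fun y => hΨnonneg x y) (fun y => le_add_of_nonneg_right (hΨnonneg y x))
    exact hΨlim x
  have hΨyx : Tendsto (fun y => Ψ y x) (nhds x) (nhds 0) := by
    apply squeeze_zero (fun y => hΨnonneg y x) (fun y => le_add_of_nonneg_left (hΨnonneg x y))
    exact hΨlim x
  rw [ContinuousAt, tendsto_order]
  constructor
  · -- lower bound: ∀ c < u x, eventually c < u y
    intro c hc
    rcases lt_or_ge c 0 with hc0 | hc0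
    · exact Eventually.of_forall fun y => lt_of_lt_of_le hc0 (hu0 y)
    -- choose δ with c*(a+δ) < (a-δ)*(u x)
    have hδex : ∃ δ : ℝ, 0 < δ ∧ δ < a ∧ c*(a+δ) < (a-δ)*(u x) := by
      have hcont : Tendsto (fun δ : ℝ => c*(a+δ) - (a-δ)*(u x)) (nhds 0)
          (nhds (c*a - a*(u x))) := by
        have : Continuous (fun δ : ℝ => c*(a+δ) - (a-δ)*(u x)) :=
          (continuous_const.mul (continuous_const.add continuous_id)).sub
            ((continuous_const.sub continuous_id).mul continuous_const)
        simpa using this.tendsto 0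
      have hneg : c*a - a*(u x) < 0 := by nlinarith
      have h1 : ∀ᶠ δ in nhds (0:ℝ), c*(a+δ) - (a-δ)*(u x) < 0 :=
        hcont.eventually_lt_const hneg
      have h2 : ∀ᶠ δ in nhds (0:ℝ), δ < a := eventually_lt_nhds ha
      obtain ⟨δ, ⟨hδ1, hδ2⟩, hδ3⟩ :=
        (((h1.and h2).filter_mono nhdsWithin_le_nhds).and self_mem_nhdsWithin).exists
        (f := nhdsWithin (0:ℝ) (Set.Ioi 0))
      exact ⟨δ, hδ3, hδ2, by linarith⟩
    obtain ⟨δ, hδ, hδa, hδc⟩ := hδex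
    obtain ⟨ε, hε, hnear⟩ := hchoose δ hδ
    have hkey := fun y => harnack_key κ hκ Φ Φ' hΦnonneg hΦderiv Ψ hHarnack
      f hfm hf0 K hK0 hfK ε δ hε hδ hδa hnear x y
    set h : EuclideanSpace ℝ (Fin d) → ℝ :=
      fun y => ((p + ε*(a-δ)*(u x)) * Real.exp (-(Ψ x y)) - p)/(ε*(a+δ)) with hhdef
    have hhle : ∀ y, h y ≤ u y := by
      intro y
      have hk := hkey y
      have hE : (0:ℝ) < Real.exp (Ψ x y) := Real.exp_pos _
      have h1 : (p + ε*(a-δ)*(u x)) * Real.exp (-(Ψ x y)) ≤ p + ε*(a+δ)*(u y) := by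
        rw [Real.exp_neg, mul_inv_le_iff₀ hE]
        exact hk
      rw [hhdef]
      rw [div_le_iff₀ (mul_pos hε (by linarith))]
      linarith
    have hT : Tendsto h (nhds x) (nhds (((p + ε*(a-δ)*(u x)) * Real.exp (-(0:ℝ)) - p)/(ε*(a+δ)))) := by
      apply Tendsto.div_const
      apply Tendsto.sub_const
      exact tendsto_const_nhds.mul ((Real.continuous_exp.tendsto _).comp hΨxy.neg)
    have hlim : c < ((p + ε*(a-δ)*(u x)) * Real.exp (-(0:ℝ)) - p)/(ε*(a+δ)) := by
      rw [neg_zero, Real.exp_zero, mul_one]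
      rw [lt_div_iff₀ (mul_pos hε (by linarith))]
      nlinarith [mul_lt_mul_of_pos_left hδc hε]
    filter_upwards [hT.eventually_const_lt hlim] with y hy
    exact lt_of_lt_of_le hy (hhle y)
  · -- upper bound: ∀ b > u x, eventually u y < b
    intro b hb
    have hb0 : 0 < b := lt_of_le_of_lt (hu0 x) hb
    have hδex : ∃ δ : ℝ, 0 < δ ∧ δ < a ∧ (a+δ)*(u x) < b*(a-δ) := by
      have hcont : Tendsto (fun δ : ℝ => (a+δ)*(u x) - b*(a-δ)) (nhds 0)
          (nhds (a*(u x) - b*a)) := by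
        have : Continuous (fun δ : ℝ => (a+δ)*(u x) - b*(a-δ)) :=
          ((continuous_const.add continuous_id).mul continuous_const).sub
            (continuous_const.mul (continuous_const.sub continuous_id))
        simpa using this.tendsto 0
      have hneg : a*(u x) - b*a < 0 := by nlinarith
      have h1 : ∀ᶠ δ in nhds (0:ℝ), (a+δ)*(u x) - b*(a-δ) < 0 :=
        hcont.eventually_lt_const hneg
      have h2 : ∀ᶠ δ in nhds (0:ℝ), δ < a := eventually_lt_nhds ha
      obtain ⟨δ, ⟨hδ1, hδ2⟩, hδ3⟩ :=
        (((h1.and h2).filter_mono nhdsWithin_le_nhds).and self_mem_nhdsWithin).exists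
        (f := nhdsWithin (0:ℝ) (Set.Ioi 0))
      exact ⟨δ, hδ3, hδ2, by linarith⟩
    obtain ⟨δ, hδ, hδa, hδb⟩ := hδex
    obtain ⟨ε, hε, hnear⟩ := hchoose δ hδ
    have hkey := fun y => harnack_key κ hκ Φ Φ' hΦnonneg hΦderiv Ψ hHarnack
      f hfm hf0 K hK0 hfK ε δ hε hδ hδa hnear y x
    set h : EuclideanSpace ℝ (Fin d) → ℝ :=
      fun y => ((p + ε*(a+δ)*(u x)) * Real.exp (Ψ y x) - p)/(ε*(a-δ)) with hhdef
    have hhle : ∀ y, u y ≤ h y := by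
      intro y
      have hk := hkey y
      rw [hhdef]
      rw [le_div_iff₀ (mul_pos hε (by linarith))]
      linarith
    have hT : Tendsto h (nhds x) (nhds (((p + ε*(a+δ)*(u x)) * Real.exp (0:ℝ) - p)/(ε*(a-δ)))) := by
      apply Tendsto.div_const
      apply Tendsto.sub_const
      exact tendsto_const_nhds.mul ((Real.continuous_exp.tendsto _).comp hΨyx)
    have hlim : ((p + ε*(a+δ)*(u x)) * Real.exp (0:ℝ) - p)/(ε*(a-δ)) < b := by
      rw [Real.exp_zero, mul_one]
      rw [div_lt_iff₀ (mul_pos hε (by linarith))]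
      nlinarith [mul_lt_mul_of_pos_left hδb hε]
    filter_upwards [hT.eventually_lt_const hlim] with y hy
    exact lt_of_le_of_lt (hhle y) hy
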